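/- Let l1,l2,l3>0 with l1+l2+l3=1, τ'∈ℝ, and k∈ℂ with sin(kl2)≠0. Define v(x) := e^{−iτ'x}·(cos(k(l2−x)) + e^{iτ'}·cos(kx))/sin(kl2) on [0,l2]. Then: (i) −(v''+2iτ'v'−(τ')²v) = k²v on (0,l2); (ii) (v'+iτ'v)(0) = k and −e^{−i(l1+l3)τ'}·(v'+iτ'v)(l2) = k; and (iii) the δ'-type condition v(0) + e^{−i(l1+l3)τ'}·v(l2) = (l1+l3)·(v'+iτ'v)(0) holds if and only if 2cot(kl2) + 2cos(τ')/sin(kl2) = k(l1+l3). -/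

import Mathlib

noncomputable section

lemma fourTerm (τ k c A B C D : ℂ) (l2 : ℝ) (z : ℂ) :
    HasDerivAt (fun z : ℂ => Complex.exp (-(Complex.I * τ * z)) *
      ((A * Complex.cos (k * ((l2 : ℂ) - z)) + B * Complex.sin (k * ((l2 : ℂ) - z))
        + C * Complex.cos (k * z) + D * Complex.sin (k * z)) / c))
    (Complex.exp (-(Complex.I * τ * z)) *
      (((-(Complex.I * τ) * A - B * k) * Complex.cos (k * ((l2 : ℂ) - z))
        + (-(Complex.I * τ) * B + A * k) * Complex.sin (k * ((l2 : ℂ) - z))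
        + (-(Complex.I * τ) * C + D * k) * Complex.cos (k * z)
        + (-(Complex.I * τ) * D - C * k) * Complex.sin (k * z)) / c)) z := by
  have h1 : HasDerivAt (fun z : ℂ => -(Complex.I * τ * z)) (-(Complex.I * τ)) z := by
    simpa [Pi.neg_def] using ((hasDerivAt_id z).const_mul (Complex.I * τ)).neg
  have h2 : HasDerivAt (fun z : ℂ => Complex.exp (-(Complex.I * τ * z)))
      (Complex.exp (-(Complex.I * τ * z)) * (-(Complex.I * τ))) z :=
    (Complex.hasDerivAt_exp _).comp z h1
  have h3 : HasDerivAt (fun z : ℂ => k * ((l2 : ℂ) - z)) (-k) z := by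
    simpa using (((hasDerivAt_id z).const_sub (l2 : ℂ)).const_mul k)
  have h4 : HasDerivAt (fun z : ℂ => k * z) k z := by
    simpa using (hasDerivAt_id z).const_mul k
  have hc1 : HasDerivAt (fun z : ℂ => Complex.cos (k * ((l2 : ℂ) - z)))
      (-Complex.sin (k * ((l2 : ℂ) - z)) * (-k)) z :=
    (Complex.hasDerivAt_cos _).comp z h3
  have hs1 : HasDerivAt (fun z : ℂ => Complex.sin (k * ((l2 : ℂ) - z)))
      (Complex.cos (k * ((l2 : ℂ) - z)) * (-k)) z :=
    (Complex.hasDerivAt_sin _).comp z h3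
  have hc2 : HasDerivAt (fun z : ℂ => Complex.cos (k * z))
      (-Complex.sin (k * z) * k) z :=
    (Complex.hasDerivAt_cos _).comp z h4
  have hs2 : HasDerivAt (fun z : ℂ => Complex.sin (k * z))
      (Complex.cos (k * z) * k) z :=
    (Complex.hasDerivAt_sin _).comp z h4
  have hsumd := ((((hc1.const_mul A).add (hs1.const_mul B)).add (hc2.const_mul C)).add
      (hs2.const_mul D)).div_const c
  have := h2.mul hsumd
  refine this.congr_deriv ?_
  simp only [Pi.add_apply]
  ring

/-- Section 6.2 of the paper: the Bloch eigenfunctions of the `δ'`-type operator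
`A'_hom(τ')`.  The explicit function `v(x) = e^{−iτ'x}(cos k(l2−x) + e^{iτ'} cos kx)/sin(k l2)`
solves the spectral equation, has (weighted) co-normal boundary data equal to `k` at both
endpoints, and satisfies the `δ'`-type condition iff the dispersion relation
`2 cot(k l2) + 2 cos τ' / sin(k l2) = k(l1+l3)` holds. -/
theorem bloch_eigenfunction_delta_prime (l1 l2 l3 : ℝ) (hl1 : 0 < l1) (hl2 : 0 < l2)
    (hl3 : 0 < l3) (hsum : l1 + l2 + l3 = 1) (τ' : ℝ) (k : ℂ)
    (hs : Complex.sin (k * l2) ≠ 0) (v : ℝ → ℂ)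
    (hv : v = fun x : ℝ => Complex.exp (-(Complex.I * (τ' : ℂ) * (x : ℂ))) *
      ((Complex.cos (k * ((l2 : ℂ) - (x : ℂ))) +
        Complex.exp (Complex.I * (τ' : ℂ)) * Complex.cos (k * (x : ℂ))) /
        Complex.sin (k * l2))) :
    (∀ x ∈ Set.Ioo (0 : ℝ) l2,
      -(deriv (deriv v) x + 2 * Complex.I * (τ' : ℂ) * deriv v x - (τ' : ℂ) ^ 2 * v x)
        = k ^ 2 * v x) ∧
    (deriv v 0 + Complex.I * (τ' : ℂ) * v 0) = k ∧
    -(Complex.exp (-(Complex.I * (((l1 + l3) * τ' : ℝ) : ℂ))) *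
        (deriv v l2 + Complex.I * (τ' : ℂ) * v l2)) = k ∧
    ((v 0 + Complex.exp (-(Complex.I * (((l1 + l3) * τ' : ℝ) : ℂ))) * v l2
        = ((l1 + l3 : ℝ) : ℂ) * (deriv v 0 + Complex.I * (τ' : ℂ) * v 0)) ↔
      (2 * Complex.cos (k * l2) / Complex.sin (k * l2)
          + 2 * Complex.cos (τ' : ℂ) / Complex.sin (k * l2)
        = k * ((l1 + l3 : ℝ) : ℂ))) := by
  have hveq : v = fun x : ℝ =>
      (fun z : ℂ => Complex.exp (-(Complex.I * (τ' : ℂ) * z)) *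
        ((1 * Complex.cos (k * ((l2 : ℂ) - z)) + 0 * Complex.sin (k * ((l2 : ℂ) - z))
          + Complex.exp (Complex.I * (τ' : ℂ)) * Complex.cos (k * z)
          + 0 * Complex.sin (k * z)) / Complex.sin (k * l2))) (x : ℂ) := by
    rw [hv]; funext x; ring
  have hv1 : ∀ x : ℝ, HasDerivAt v
      (Complex.exp (-(Complex.I * (τ' : ℂ) * (x : ℂ))) *
        (((-(Complex.I * (τ' : ℂ)) * 1 - 0 * k) * Complex.cos (k * ((l2 : ℂ) - (x : ℂ)))
          + (-(Complex.I * (τ' : ℂ)) * 0 + 1 * k) * Complex.sin (k * ((l2 : ℂ) - (x : ℂ)))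
          + (-(Complex.I * (τ' : ℂ)) * Complex.exp (Complex.I * (τ' : ℂ)) + 0 * k) *
              Complex.cos (k * (x : ℂ))
          + (-(Complex.I * (τ' : ℂ)) * 0 - Complex.exp (Complex.I * (τ' : ℂ)) * k) *
              Complex.sin (k * (x : ℂ))) / Complex.sin (k * l2))) x := by
    intro x
    rw [hveq]
    exact (fourTerm (τ' : ℂ) k (Complex.sin (k * l2)) 1 0
      (Complex.exp (Complex.I * (τ' : ℂ))) 0 l2 (x : ℂ)).comp_ofReal
  have hd1 : deriv v = fun x : ℝ =>
      (fun z : ℂ => Complex.exp (-(Complex.I * (τ' : ℂ) * z)) *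
        (((-(Complex.I * (τ' : ℂ)) * 1 - 0 * k) * Complex.cos (k * ((l2 : ℂ) - z))
          + (-(Complex.I * (τ' : ℂ)) * 0 + 1 * k) * Complex.sin (k * ((l2 : ℂ) - z))
          + (-(Complex.I * (τ' : ℂ)) * Complex.exp (Complex.I * (τ' : ℂ)) + 0 * k) *
              Complex.cos (k * z)
          + (-(Complex.I * (τ' : ℂ)) * 0 - Complex.exp (Complex.I * (τ' : ℂ)) * k) *
              Complex.sin (k * z)) / Complex.sin (k * l2))) (x : ℂ) :=
    funext fun x => (hv1 x).deriv
  have hv2 : ∀ x : ℝ, HasDerivAt (deriv v)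
      (Complex.exp (-(Complex.I * (τ' : ℂ) * (x : ℂ))) *
        (((-(Complex.I * (τ' : ℂ)) * (-(Complex.I * (τ' : ℂ)) * 1 - 0 * k)
            - (-(Complex.I * (τ' : ℂ)) * 0 + 1 * k) * k) * Complex.cos (k * ((l2 : ℂ) - (x : ℂ)))
          + (-(Complex.I * (τ' : ℂ)) * (-(Complex.I * (τ' : ℂ)) * 0 + 1 * k)
            + (-(Complex.I * (τ' : ℂ)) * 1 - 0 * k) * k) * Complex.sin (k * ((l2 : ℂ) - (x : ℂ)))
          + (-(Complex.I * (τ' : ℂ)) * (-(Complex.I * (τ' : ℂ)) * Complex.exp (Complex.I * (τ' : ℂ)) + 0 * k)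
            + (-(Complex.I * (τ' : ℂ)) * 0 - Complex.exp (Complex.I * (τ' : ℂ)) * k) * k) *
              Complex.cos (k * (x : ℂ))
          + (-(Complex.I * (τ' : ℂ)) * (-(Complex.I * (τ' : ℂ)) * 0 - Complex.exp (Complex.I * (τ' : ℂ)) * k)
            - (-(Complex.I * (τ' : ℂ)) * Complex.exp (Complex.I * (τ' : ℂ)) + 0 * k) * k) *
              Complex.sin (k * (x : ℂ))) / Complex.sin (k * l2))) x := by
    intro x
    rw [hd1]
    exact (fourTerm (τ' : ℂ) k (Complex.sin (k * l2))
      (-(Complex.I * (τ' : ℂ)) * 1 - 0 * k)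
      (-(Complex.I * (τ' : ℂ)) * 0 + 1 * k)
      (-(Complex.I * (τ' : ℂ)) * Complex.exp (Complex.I * (τ' : ℂ)) + 0 * k)
      (-(Complex.I * (τ' : ℂ)) * 0 - Complex.exp (Complex.I * (τ' : ℂ)) * k)
      l2 (x : ℂ)).comp_ofReal
  refine ⟨?_, ?_, ?_, ?_⟩
  · intro x hx
    rw [(hv2 x).deriv, (hv1 x).deriv]
    simp only [hv]
    field_simp
    linear_combination (norm := ring_nf) ((τ' : ℂ) ^ 2 *
      (Complex.cos (-((x : ℂ) * k) + k * (l2 : ℂ)) +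
        Complex.exp ((τ' : ℂ) * Complex.I) * Complex.cos ((x : ℂ) * k))) * Complex.I_sq
  · rw [(hv1 0).deriv]
    simp only [hv]
    simp only [Complex.ofReal_zero, mul_zero, sub_zero, Complex.cos_zero, Complex.sin_zero,
      Complex.exp_zero, neg_zero]
    field_simp
    ring
  · have hc : (l1 : ℂ) + l3 = 1 - l2 := by
      have hr : l1 + l3 = 1 - l2 := by linarith
      exact_mod_cast congrArg (Complex.ofReal) hr
    have hEe : Complex.exp (-(Complex.I * (((l1 + l3) * τ' : ℝ) : ℂ))) *
        (Complex.exp (Complex.I * (τ' : ℂ)) * Complex.exp (-(Complex.I * (τ' : ℂ) * (l2 : ℂ)))) = 1 := by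
      rw [← Complex.exp_add, ← Complex.exp_add, ← Complex.exp_zero]
      congr 1
      push_cast
      linear_combination (-(Complex.I * (τ' : ℂ))) * hc
    rw [(hv1 l2).deriv]
    simp only [hv]
    simp only [sub_self, mul_zero, Complex.cos_zero, Complex.sin_zero]
    push_cast at hEe ⊢
    field_simp
    linear_combination (norm := ring_nf) k * hEe + (Complex.exp (-(Complex.I * (((l1 : ℂ) + l3) * τ'))) *
      (Complex.exp (Complex.I * τ') * Complex.exp (-(Complex.I * τ' * l2))) * k) * mul_inv_cancel₀ hs
  · have hc : (l1 : ℂ) + l3 = 1 - l2 := by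
      have hr : l1 + l3 = 1 - l2 := by linarith
      exact_mod_cast congrArg (Complex.ofReal) hr
    have h2 : deriv v 0 + Complex.I * (τ' : ℂ) * v 0 = k := by
      rw [(hv1 0).deriv]
      simp only [hv]
      simp only [Complex.ofReal_zero, mul_zero, sub_zero, Complex.cos_zero, Complex.sin_zero,
        Complex.exp_zero, neg_zero]
      field_simp
      ring
    have hexp2 : Complex.exp (-(Complex.I * (((l1 + l3) * τ' : ℝ) : ℂ))) *
        Complex.exp (-(Complex.I * (τ' : ℂ) * (l2 : ℂ))) = Complex.exp (-(Complex.I * (τ' : ℂ))) := by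
      rw [← Complex.exp_add]
      congr 1
      push_cast
      linear_combination (-(Complex.I * (τ' : ℂ))) * hc
    have hee : Complex.exp (-(Complex.I * (τ' : ℂ))) * Complex.exp (Complex.I * (τ' : ℂ)) = 1 := by
      rw [← Complex.exp_add]
      norm_num
    have hcos : Complex.cos ((τ' : ℝ) : ℂ) =
        (Complex.exp (Complex.I * (τ' : ℂ)) + Complex.exp (-(Complex.I * (τ' : ℂ)))) / 2 := by
      rw [Complex.cos]
      ring_nf
    have hval : v 0 + Complex.exp (-(Complex.I * (((l1 + l3) * τ' : ℝ) : ℂ))) * v l2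
        = (2 * Complex.cos (k * l2) + 2 * Complex.cos ((τ' : ℝ) : ℂ)) / Complex.sin (k * l2) := by
      simp only [hv]
      simp only [Complex.ofReal_zero, mul_zero, sub_zero, sub_self, Complex.cos_zero,
        Complex.sin_zero, Complex.exp_zero, neg_zero]
      rw [hcos]
      push_cast at hexp2 ⊢
      field_simp
      linear_combination (norm := ring_nf)
        ((Complex.exp (Complex.I * (τ' : ℂ)) * Complex.cos (k * (l2 : ℂ)) + 1) * hexp2
          + Complex.cos (k * (l2 : ℂ)) * hee)
    rw [h2, hval]
    constructor <;> intro h <;> linear_combination h
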